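/- Let G be a finite group, let g, h ∈ G with g ∉ N_G(⟨h⟩), and let m be the smallest positive integer such that g ∈ N_G(⟨h^m⟩). Let k be an integer with 1 ≤ k < o(h). If gcd(k,m) ≠ 1, then both Bovdi units b_k(g,h̃) = h^k + (1-h)·g·h̃ and b_k(h̃,g) = h^k + h̃·g·(1-h) have infinite order in the unit group U(ℤG). -/

import Mathlib

/-- `h̃ = ∑_{x ∈ ⟨h⟩} x` in the group ring `R G`, written as `∑_{i < o(h)} h^i`. -/
noncomputable def grpTilde (R : Type*) [CommRing R] {G : Type*} [Group G] (h : G) :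
    MonoidAlgebra R G :=
  ∑ i ∈ Finset.range (orderOf h), MonoidAlgebra.of R G (h ^ i)

/-- Bovdi unit `b_k(g, h̃) = h^k + (1 - h)·g·h̃`. -/
noncomputable def bovdiL (R : Type*) [CommRing R] {G : Type*} [Group G] (g h : G) (k : ℕ) :
    MonoidAlgebra R G :=
  MonoidAlgebra.of R G (h ^ k) +
    (1 - MonoidAlgebra.of R G h) * MonoidAlgebra.of R G g * grpTilde R h

/-- Bovdi unit `b_k(h̃, g) = h^k + h̃·g·(1 - h)`. -/
noncomputable def bovdiR (R : Type*) [CommRing R] {G : Type*} [Group G] (g h : G) (k : ℕ) :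
    MonoidAlgebra R G :=
  MonoidAlgebra.of R G (h ^ k) +
    grpTilde R h * MonoidAlgebra.of R G g * (1 - MonoidAlgebra.of R G h)

open Finset Subgroup MonoidAlgebra
set_option linter.unusedSectionVars false

section Tilde
variable {G : Type*} [Group G] [Fintype G]

lemma tilde_mul_of (h : G) : grpTilde ℤ h * MonoidAlgebra.of ℤ G h = grpTilde ℤ h := by
  unfold grpTilde
  rw [Finset.sum_mul]
  have h1 : ∀ i, MonoidAlgebra.of ℤ G (h ^ i) * MonoidAlgebra.of ℤ G h
      = MonoidAlgebra.of ℤ G (h ^ (i + 1)) := fun i => by rw [← map_mul, pow_succ]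
  simp_rw [h1]
  have e2 := Finset.sum_range_succ' (fun i => MonoidAlgebra.of ℤ G (h ^ i)) (orderOf h)
  have e3 := Finset.sum_range_succ (fun i => MonoidAlgebra.of ℤ G (h ^ i)) (orderOf h)
  rw [e3] at e2
  have : MonoidAlgebra.of ℤ G (h ^ orderOf h) = MonoidAlgebra.of ℤ G (h ^ (0:ℕ)) := by
    rw [pow_orderOf_eq_one, pow_zero]
  rw [this] at e2
  exact add_right_cancel e2.symm

lemma of_mul_tilde (h : G) : MonoidAlgebra.of ℤ G h * grpTilde ℤ h = grpTilde ℤ h := by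
  unfold grpTilde
  rw [Finset.mul_sum]
  have h1 : ∀ i, MonoidAlgebra.of ℤ G h * MonoidAlgebra.of ℤ G (h ^ i)
      = MonoidAlgebra.of ℤ G (h ^ (i + 1)) := fun i => by rw [← map_mul, pow_succ']
  simp_rw [h1]
  have e2 := Finset.sum_range_succ' (fun i => MonoidAlgebra.of ℤ G (h ^ i)) (orderOf h)
  have e3 := Finset.sum_range_succ (fun i => MonoidAlgebra.of ℤ G (h ^ i)) (orderOf h)
  rw [e3] at e2
  have : MonoidAlgebra.of ℤ G (h ^ orderOf h) = MonoidAlgebra.of ℤ G (h ^ (0:ℕ)) := by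
    rw [pow_orderOf_eq_one, pow_zero]
  rw [this] at e2
  exact add_right_cancel e2.symm

lemma tilde_mul_pow (h : G) (j : ℕ) :
    grpTilde ℤ h * MonoidAlgebra.of ℤ G (h ^ j) = grpTilde ℤ h := by
  induction j with
  | zero => rw [pow_zero, map_one, mul_one]
  | succ n ih => rw [pow_succ, map_mul, ← mul_assoc, ih, tilde_mul_of]

lemma pow_mul_tilde (h : G) (j : ℕ) :
    MonoidAlgebra.of ℤ G (h ^ j) * grpTilde ℤ h = grpTilde ℤ h := by
  induction j with
  | zero => rw [pow_zero, map_one, one_mul]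
  | succ n ih => rw [pow_succ', map_mul, mul_assoc, ih, of_mul_tilde]

lemma tilde_mul_pow_inv (h : G) (j : ℕ) :
    grpTilde ℤ h * MonoidAlgebra.of ℤ G ((h ^ j)⁻¹) = grpTilde ℤ h := by
  have := tilde_mul_pow h j
  calc grpTilde ℤ h * MonoidAlgebra.of ℤ G ((h ^ j)⁻¹)
      = grpTilde ℤ h * MonoidAlgebra.of ℤ G (h ^ j) * MonoidAlgebra.of ℤ G ((h ^ j)⁻¹) := by
        rw [this]
    _ = grpTilde ℤ h := by rw [mul_assoc, ← map_mul, mul_inv_cancel, map_one, mul_one]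

lemma pow_inv_mul_tilde (h : G) (j : ℕ) :
    MonoidAlgebra.of ℤ G ((h ^ j)⁻¹) * grpTilde ℤ h = grpTilde ℤ h := by
  have := pow_mul_tilde h j
  calc MonoidAlgebra.of ℤ G ((h ^ j)⁻¹) * grpTilde ℤ h
      = MonoidAlgebra.of ℤ G ((h ^ j)⁻¹) * (MonoidAlgebra.of ℤ G (h ^ j) * grpTilde ℤ h) := by
        rw [this]
    _ = grpTilde ℤ h := by rw [← mul_assoc, ← map_mul, inv_mul_cancel, map_one, one_mul]

lemma tilde_mul_one_sub (h : G) :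
    grpTilde ℤ h * (1 - MonoidAlgebra.of ℤ G h) = 0 := by
  rw [mul_sub, mul_one, tilde_mul_of, sub_self]

lemma one_sub_mul_tilde (h : G) :
    (1 - MonoidAlgebra.of ℤ G h) * grpTilde ℤ h = 0 := by
  rw [sub_mul, one_mul, of_mul_tilde, sub_self]

end Tilde

section Units
variable {G : Type*} [Group G] [Fintype G]

variable (g h : G) (k : ℕ)

local notation "of'" => MonoidAlgebra.of ℤ G

lemma xL_sq : ((1 - of' h) * of' g * grpTilde ℤ h) * ((1 - of' h) * of' g * grpTilde ℤ h) = 0 := by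
  have : grpTilde ℤ h * ((1 - of' h) * of' g * grpTilde ℤ h)
      = (grpTilde ℤ h * (1 - of' h)) * of' g * grpTilde ℤ h := by noncomm_ring
  calc ((1 - of' h) * of' g * grpTilde ℤ h) * ((1 - of' h) * of' g * grpTilde ℤ h)
      = (1 - of' h) * of' g * (grpTilde ℤ h * ((1 - of' h) * of' g * grpTilde ℤ h)) := by noncomm_ring
    _ = 0 := by rw [this, tilde_mul_one_sub]; noncomm_ring

lemma yR_sq : (grpTilde ℤ h * of' g * (1 - of' h)) * (grpTilde ℤ h * of' g * (1 - of' h)) = 0 := by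
  calc (grpTilde ℤ h * of' g * (1 - of' h)) * (grpTilde ℤ h * of' g * (1 - of' h))
      = grpTilde ℤ h * of' g * ((1 - of' h) * grpTilde ℤ h) * (of' g * (1 - of' h)) := by noncomm_ring
    _ = 0 := by rw [one_sub_mul_tilde]; noncomm_ring

lemma xL_mul_powinv :
    ((1 - of' h) * of' g * grpTilde ℤ h) * of' ((h ^ k)⁻¹) = (1 - of' h) * of' g * grpTilde ℤ h := by
  rw [mul_assoc, tilde_mul_pow_inv]

lemma powinv_mul_yR :
    of' ((h ^ k)⁻¹) * (grpTilde ℤ h * of' g * (1 - of' h)) = grpTilde ℤ h * of' g * (1 - of' h) := by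
  rw [← mul_assoc, ← mul_assoc, pow_inv_mul_tilde]

lemma isUnit_bovdiL : IsUnit (bovdiL ℤ g h k) := by
  set x := (1 - of' h) * of' g * grpTilde ℤ h with hx
  set a := of' (h ^ k) with ha
  set a' := of' ((h ^ k)⁻¹) with ha'
  have haa' : a * a' = 1 := by rw [ha, ha', ← map_mul, mul_inv_cancel, map_one]
  have ha'a : a' * a = 1 := by rw [ha, ha', ← map_mul, inv_mul_cancel, map_one]
  have hxa' : x * a' = x := xL_mul_powinv g h k
  have hxx : x * x = 0 := xL_sq g h
  refine ⟨⟨a + x, a' - a' * x * a', ?_, ?_⟩, rfl⟩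
  · calc (a + x) * (a' - a' * x * a')
        = a * a' - (a * a') * x * a' + x * a' - (x * a') * (x * a') := by noncomm_ring
      _ = 1 := by simp only [haa', hxa', hxx, one_mul]; noncomm_ring
  · calc (a' - a' * x * a') * (a + x)
        = a' * a + a' * x - a' * x * (a' * a) - a' * ((x * a') * x) := by noncomm_ring
      _ = 1 := by simp only [ha'a, hxa', hxx, one_mul, mul_one, mul_zero]; noncomm_ring

lemma isUnit_bovdiR : IsUnit (bovdiR ℤ g h k) := by
  set y := grpTilde ℤ h * of' g * (1 - of' h) with hy
  set a := of' (h ^ k) with ha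
  set a' := of' ((h ^ k)⁻¹) with ha'
  have haa' : a * a' = 1 := by rw [ha, ha', ← map_mul, mul_inv_cancel, map_one]
  have ha'a : a' * a = 1 := by rw [ha, ha', ← map_mul, inv_mul_cancel, map_one]
  have ha'y : a' * y = y := powinv_mul_yR g h k
  have hyy : y * y = 0 := yR_sq g h
  refine ⟨⟨a + y, a' - a' * y * a', ?_, ?_⟩, rfl⟩
  · calc (a + y) * (a' - a' * y * a')
        = a * a' - (a * a') * y * a' + y * a' - (y * (a' * y)) * a' := by noncomm_ring
      _ = 1 := by simp only [haa', ha'y, hyy, one_mul, zero_mul]; noncomm_ring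
  · calc (a' - a' * y * a') * (a + y)
        = a' * a + a' * y - a' * y * (a' * a) - (a' * y) * (a' * y) := by noncomm_ring
      _ = 1 := by simp only [ha'a, ha'y, hyy, one_mul, mul_one, mul_zero]; noncomm_ring

end Units

section Pow
variable {G : Type*} [Group G] [Fintype G] (g h : G) (k : ℕ)

local notation "of'" => MonoidAlgebra.of ℤ G

lemma bovdiL_pow (n : ℕ) :
    (bovdiL ℤ g h k) ^ n = of' ((h ^ k) ^ n) +
      (∑ i ∈ Finset.range n, of' ((h ^ k) ^ i)) * ((1 - of' h) * of' g * grpTilde ℤ h) := by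
  set x := (1 - of' h) * of' g * grpTilde ℤ h with hxdef
  have hxpow : x * of' (h ^ k) = x := by
    rw [hxdef, mul_assoc, tilde_mul_pow]
  have hxx : x * x = 0 := xL_sq g h
  induction n with
  | zero => simp [MonoidAlgebra.one_def]
  | succ n ih =>
    rw [pow_succ, ih]
    have hb : bovdiL ℤ g h k = of' (h ^ k) + x := rfl
    rw [hb, Finset.sum_range_succ]
    calc (of' ((h ^ k) ^ n) + (∑ i ∈ Finset.range n, of' ((h ^ k) ^ i)) * x) * (of' (h ^ k) + x)
        = of' ((h ^ k) ^ n) * of' (h ^ k) + of' ((h ^ k) ^ n) * x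
          + (∑ i ∈ Finset.range n, of' ((h ^ k) ^ i)) * (x * of' (h ^ k))
          + (∑ i ∈ Finset.range n, of' ((h ^ k) ^ i)) * (x * x) := by noncomm_ring
      _ = of' ((h ^ k) ^ (n + 1)) +
          ((∑ i ∈ Finset.range n, of' ((h ^ k) ^ i)) + of' ((h ^ k) ^ n)) * x := by
          rw [hxpow, hxx, ← map_mul, ← pow_succ]; noncomm_ring

lemma bovdiR_pow (n : ℕ) :
    (bovdiR ℤ g h k) ^ n = of' ((h ^ k) ^ n) +
      (grpTilde ℤ h * of' g * (1 - of' h)) * ∑ i ∈ Finset.range n, of' ((h ^ k) ^ i) := by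
  set y := grpTilde ℤ h * of' g * (1 - of' h) with hydef
  have hpowy : of' (h ^ k) * y = y := by
    rw [hydef, ← mul_assoc, ← mul_assoc, pow_mul_tilde]
  have hyy : y * y = 0 := yR_sq g h
  induction n with
  | zero => simp [MonoidAlgebra.one_def]
  | succ n ih =>
    rw [pow_succ', ih]
    have hb : bovdiR ℤ g h k = of' (h ^ k) + y := rfl
    rw [hb, Finset.sum_range_succ]
    calc (of' (h ^ k) + y) * (of' ((h ^ k) ^ n) + y * ∑ i ∈ Finset.range n, of' ((h ^ k) ^ i))
        = of' (h ^ k) * of' ((h ^ k) ^ n) + (of' (h ^ k) * y) * ∑ i ∈ Finset.range n, of' ((h ^ k) ^ i)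
          + y * of' ((h ^ k) ^ n)
          + (y * y) * ∑ i ∈ Finset.range n, of' ((h ^ k) ^ i) := by noncomm_ring
      _ = of' ((h ^ k) ^ (n + 1)) +
          y * ((∑ i ∈ Finset.range n, of' ((h ^ k) ^ i)) + of' ((h ^ k) ^ n)) := by
          rw [hpowy, hyy, ← map_mul, ← pow_succ']; noncomm_ring

lemma sum_range_periodic (w : G) (q : ℕ) :
    ∑ i ∈ Finset.range (q * orderOf w), of' (w ^ i) = q • grpTilde ℤ w := by
  induction q with
  | zero => simp
  | succ q ih =>
    rw [succ_nsmul, ← ih, add_mul, one_mul, Finset.sum_range_add]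
    congr 1
    unfold grpTilde
    refine Finset.sum_congr rfl fun i _ => ?_
    rw [pow_add, pow_mul', pow_orderOf_eq_one, one_pow, one_mul]

lemma nsmul_cancel {v : MonoidAlgebra ℤ G} {n : ℕ} (hn : 0 < n) (hv : n • v = 0) : v = 0 := by
  have h1 : (n : ℤ) • v = 0 := by rwa [Nat.cast_smul_eq_nsmul]
  have hz : ∀ w : G →₀ ℤ, (n : ℤ) • w = 0 → w = 0 := fun w hw =>
    (smul_eq_zero.mp hw).resolve_left (by exact_mod_cast hn.ne')
  exact MonoidAlgebra.coeff_eq_zero.mp (hz v.coeff (by rw [← MonoidAlgebra.coeff_smul, h1]; rfl))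

end Pow

section Key
variable {G : Type*} [Group G] [Fintype G]

lemma zpowers_conj_eq (g h : G) (a : ℕ) (ha : 0 < a)
    (hx : g * h ^ a * g⁻¹ ∈ Subgroup.zpowers h) :
    Subgroup.zpowers (g * h ^ a * g⁻¹) = Subgroup.zpowers (h ^ a) := by
  set x := g * h ^ a * g⁻¹ with hxdef
  have horder : orderOf x = orderOf (h ^ a) := by
    have hsc : SemiconjBy g (h ^ a) x := by
      rw [SemiconjBy, hxdef]; group
    exact (hsc.orderOf_eq g).symm
  -- write x as a natural power of h
  obtain ⟨s, hs⟩ := Subgroup.mem_zpowers_iff.mp hx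
  have he : 0 < orderOf h := orderOf_pos h
  set e := orderOf h with hedef
  have hmodnn : 0 ≤ s % (e : ℤ) := Int.emod_nonneg s (by exact_mod_cast he.ne')
  set s' : ℕ := (s % (e : ℤ)).toNat with hs'def
  have hxs' : h ^ s' = x := by
    rw [← hs, ← zpow_natCast, hs'def, Int.toNat_of_nonneg hmodnn, zpow_mod_orderOf]
  -- gcds agree
  have hgcd : Nat.gcd e s' = Nat.gcd e a := by
    have h1 : orderOf (h ^ s') = orderOf (h ^ a) := by rw [hxs', horder]
    rw [orderOf_pow, orderOf_pow] at h1
    have d1 : Nat.gcd e s' ∣ e := Nat.gcd_dvd_left _ _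
    have d2 : Nat.gcd e a ∣ e := Nat.gcd_dvd_left _ _
    calc Nat.gcd e s' = e / (e / Nat.gcd e s') := (Nat.div_div_self d1 he.ne').symm
      _ = e / (e / Nat.gcd e a) := by rw [h1]
      _ = Nat.gcd e a := Nat.div_div_self d2 he.ne'
  -- h ^ gcd e a ∈ zpowers (h ^ a)
  have hbez : h ^ (Nat.gcd e a : ℤ) ∈ Subgroup.zpowers (h ^ a) := by
    rw [Nat.gcd_eq_gcd_ab e a]
    have : h ^ ((e : ℤ) * Nat.gcdA e a + (a : ℤ) * Nat.gcdB e a)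
        = (h ^ (e : ℤ)) ^ Nat.gcdA e a * (h ^ (a : ℤ)) ^ Nat.gcdB e a := by
      rw [← zpow_mul, ← zpow_mul, ← zpow_add]
    rw [this]
    have he1 : h ^ (e : ℤ) = 1 := by rw [zpow_natCast, hedef, pow_orderOf_eq_one]
    rw [he1, one_zpow, one_mul, zpow_natCast]
    exact Subgroup.zpow_mem_zpowers _ _
  have hmem : x ∈ Subgroup.zpowers (h ^ a) := by
    rw [← hxs']
    have : h ^ s' = (h ^ Nat.gcd e s') ^ (s' / Nat.gcd e s') := by
      rw [← pow_mul, Nat.mul_div_cancel' (Nat.gcd_dvd_right _ _)]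
    rw [this, hgcd]
    have : h ^ Nat.gcd e a ∈ Subgroup.zpowers (h ^ a) := by
      have := hbez; rwa [zpow_natCast] at this
    exact Subgroup.pow_mem _ this _
  -- subgroup inclusion plus equal cardinality
  have hle : Subgroup.zpowers x ≤ Subgroup.zpowers (h ^ a) := Subgroup.zpowers_le.mpr hmem
  refine Subgroup.eq_of_le_of_card_ge hle ?_
  rw [Nat.card_zpowers, Nat.card_zpowers, horder]

lemma key_dvd (g h : G) (m : ℕ) (hm : 0 < m)
    (hgm : g ∈ Subgroup.normalizer (Subgroup.zpowers (h ^ m) : Set G))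
    (hmin : ∀ m' : ℕ, 0 < m' → g ∈ Subgroup.normalizer (Subgroup.zpowers (h ^ m') : Set G) → m ≤ m') :
    ∀ t : ℤ, g * h ^ t * g⁻¹ ∈ Subgroup.zpowers h → (m : ℤ) ∣ t := by
  set A : AddSubgroup ℤ :=
    { carrier := {t : ℤ | g * h ^ t * g⁻¹ ∈ Subgroup.zpowers h}
      zero_mem' := by
        show g * h ^ (0 : ℤ) * g⁻¹ ∈ Subgroup.zpowers h
        simpa using one_mem (Subgroup.zpowers h)
      add_mem' := by
        intro s t hs ht
        show g * h ^ (s + t) * g⁻¹ ∈ Subgroup.zpowers h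
        have heq : g * h ^ (s + t) * g⁻¹ = (g * h ^ s * g⁻¹) * (g * h ^ t * g⁻¹) := by
          rw [zpow_add]; group
        rw [heq]; exact mul_mem hs ht
      neg_mem' := by
        intro t ht
        show g * h ^ (-t) * g⁻¹ ∈ Subgroup.zpowers h
        have heq : g * h ^ (-t) * g⁻¹ = (g * h ^ t * g⁻¹)⁻¹ := by
          rw [zpow_neg]; group
        rw [heq]; exact inv_mem ht } with hAdef
  intro t htA
  obtain ⟨a, hA⟩ := Int.subgroup_cyclic A
  have hmemA : ∀ u : ℤ, u ∈ A ↔ a ∣ u := by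
    intro u
    rw [hA, AddSubgroup.mem_closure_singleton]
    constructor
    · rintro ⟨n, rfl⟩; simpa [zsmul_eq_mul] using dvd_mul_left a n
    · rintro ⟨n, rfl⟩; exact ⟨n, by simp [zsmul_eq_mul, Int.cast_id, mul_comm]⟩
  -- m ∈ A
  have hmA : (m : ℤ) ∈ A := by
    have h1 : g * h ^ m * g⁻¹ ∈ Subgroup.zpowers (h ^ m) :=
      (Subgroup.mem_normalizer_iff.mp hgm (h ^ m)).mp (Subgroup.mem_zpowers _)
    have h2 : g * h ^ m * g⁻¹ ∈ Subgroup.zpowers h :=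
      Subgroup.zpowers_le.mpr (Subgroup.npow_mem_zpowers h m) h1
    show g * h ^ (m : ℤ) * g⁻¹ ∈ Subgroup.zpowers h
    rwa [zpow_natCast]
  have hane : a ≠ 0 := by
    rintro rfl
    have := (hmemA (m : ℤ)).mp hmA
    simp only [zero_dvd_iff, Int.natCast_eq_zero] at this
    exact hm.ne' this
  set a' : ℕ := a.natAbs with ha'def
  have ha'pos : 0 < a' := Int.natAbs_pos.mpr hane
  have ha'A : (a' : ℤ) ∈ A := by
    rcases Int.natAbs_eq a with h | h
    · rw [← h]; exact (hmemA a).mpr dvd_rfl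
    · have : -(a' : ℤ) ∈ A := by rw [← h]; exact (hmemA a).mpr dvd_rfl
      simpa using A.neg_mem this
  -- g normalizes zpowers (h ^ a')
  have hxa' : g * h ^ a' * g⁻¹ ∈ Subgroup.zpowers h := by
    have := ha'A
    rw [hAdef] at this
    simpa [zpow_natCast] using this
  have hz : Subgroup.zpowers (g * h ^ a' * g⁻¹) = Subgroup.zpowers (h ^ a') :=
    zpowers_conj_eq g h a' ha'pos hxa'
  have hnorm : g ∈ Subgroup.normalizer (Subgroup.zpowers (h ^ a') : Set G) := by
    rw [Subgroup.mem_normalizer_iff]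
    intro n
    constructor
    · intro hn
      obtain ⟨c, hc⟩ := Subgroup.mem_zpowers_iff.mp hn
      rw [← hz]
      refine Subgroup.mem_zpowers_iff.mpr ⟨c, ?_⟩
      rw [← hc]
      simp [mul_zpow, conj_zpow]
    · intro hn
      rw [← hz] at hn
      obtain ⟨c, hc⟩ := Subgroup.mem_zpowers_iff.mp hn
      have hc' : g * (h ^ a') ^ c * g⁻¹ = g * n * g⁻¹ := by
        rw [← hc]; simp [conj_zpow]
      have : (h ^ a') ^ c = n := mul_left_cancel (mul_right_cancel hc')
      rw [← this]
      exact Subgroup.zpow_mem_zpowers _ _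
  have hma' : m ≤ a' := hmin a' ha'pos hnorm
  have ha'm : a' ∣ m := by
    have := (hmemA (m : ℤ)).mp hmA
    exact Int.ofNat_dvd.mp (Int.natAbs_dvd.mpr this)
  have : a' = m := Nat.le_antisymm (Nat.le_of_dvd hm ha'm) hma'
  -- conclude
  have hat : a ∣ t := (hmemA t).mp htA
  have : (a' : ℤ) ∣ t := by rwa [ha'def, Int.natAbs_dvd]
  rwa [‹a' = m›] at this

end Key

section Coeff
variable {G : Type*} [Group G] [Fintype G]

local notation "of'" => MonoidAlgebra.of ℤ G

lemma expand_two (w c v : G) :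
    grpTilde ℤ w * (of' c * grpTilde ℤ v) =
      ∑ i ∈ Finset.range (orderOf w), ∑ j ∈ Finset.range (orderOf v),
        MonoidAlgebra.single (w ^ i * c * v ^ j) (1 : ℤ) := by
  unfold grpTilde
  rw [Finset.mul_sum, Finset.sum_mul]
  refine Finset.sum_congr rfl fun i _ => ?_
  rw [Finset.mul_sum]
  refine Finset.sum_congr rfl fun j _ => ?_
  rw [← mul_assoc, ← map_mul, ← map_mul, MonoidAlgebra.of_apply]

lemma gcd_contra {k m : ℕ} (hgcd : Nat.gcd k m ≠ 1) (i : ℕ) : ¬ (m ∣ k * i + 1) := by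
  intro hdvd
  have h1 : Nat.gcd k m ∣ k * i + 1 := dvd_trans (Nat.gcd_dvd_right k m) hdvd
  have h2 : Nat.gcd k m ∣ k * i := Dvd.dvd.mul_right (Nat.gcd_dvd_left k m) i
  have : Nat.gcd k m ∣ 1 := (Nat.dvd_add_right h2).mp h1
  exact hgcd (Nat.dvd_one.mp this)

lemma coeff_pos (c : G) (e1 e2 : ℕ) (he1 : 0 < e1) (he2 : 0 < e2) (w v : G)
    (hc : w ^ 0 * c * v ^ 0 = c) :
    0 < (∑ i ∈ Finset.range e1, ∑ j ∈ Finset.range e2,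
        MonoidAlgebra.single (w ^ i * c * v ^ j) (1 : ℤ)).coeff c := by
  classical
  simp only [MonoidAlgebra.coeff_sum, MonoidAlgebra.coeff_single]
  rw [Finsupp.finset_sum_apply]
  refine Finset.sum_pos' (fun i _ => ?_) ⟨0, Finset.mem_range.mpr he1, ?_⟩
  · rw [Finsupp.finset_sum_apply]
    refine Finset.sum_nonneg fun j _ => ?_
    rw [Finsupp.single_apply]
    split <;> norm_num
  · rw [Finsupp.finset_sum_apply]
    refine Finset.sum_pos' (fun j _ => ?_) ⟨0, Finset.mem_range.mpr he2, ?_⟩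
    · rw [Finsupp.single_apply]; split <;> norm_num
    · rw [Finsupp.single_apply, if_pos hc]; norm_num

lemma coeff_zero (c cc : G) (e1 e2 : ℕ) (w v : G)
    (hc : ∀ i j, ¬ (w ^ i * cc * v ^ j = c)) :
    (∑ i ∈ Finset.range e1, ∑ j ∈ Finset.range e2,
        MonoidAlgebra.single (w ^ i * cc * v ^ j) (1 : ℤ)).coeff c = 0 := by
  classical
  simp only [MonoidAlgebra.coeff_sum, MonoidAlgebra.coeff_single]
  rw [Finsupp.finset_sum_apply]
  refine Finset.sum_eq_zero fun i _ => ?_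
  rw [Finsupp.finset_sum_apply]
  refine Finset.sum_eq_zero fun j _ => ?_
  rw [Finsupp.single_apply, if_neg (hc i j)]

end Coeff

section NonVanish
variable {G : Type*} [Group G] [Fintype G]

local notation "of'" => MonoidAlgebra.of ℤ G

lemma TxL_ne (g h : G) (k m : ℕ)
    (hdvd : ∀ t : ℤ, g⁻¹ * h ^ t * g⁻¹⁻¹ ∈ Subgroup.zpowers h → (m : ℤ) ∣ t)
    (hgcd : Nat.gcd k m ≠ 1) :
    grpTilde ℤ (h ^ k) * ((1 - of' h) * of' g * grpTilde ℤ h) ≠ 0 := by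
  intro h0
  have hsplit : grpTilde ℤ (h ^ k) * ((1 - of' h) * of' g * grpTilde ℤ h)
      = grpTilde ℤ (h ^ k) * (of' g * grpTilde ℤ h)
        - grpTilde ℤ (h ^ k) * (of' (h * g) * grpTilde ℤ h) := by
    rw [map_mul]; noncomm_ring
  rw [hsplit, sub_eq_zero, expand_two, expand_two] at h0
  have hP := coeff_pos g (orderOf (h ^ k)) (orderOf h) (orderOf_pos _) (orderOf_pos _)
    (h ^ k) h (by simp)
  have hQ : (∑ i ∈ Finset.range (orderOf (h ^ k)), ∑ j ∈ Finset.range (orderOf h),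
      MonoidAlgebra.single ((h ^ k) ^ i * (h * g) * h ^ j) (1 : ℤ)).coeff g = 0 := by
    refine coeff_zero g (h * g) _ _ (h ^ k) h fun i j heq => ?_
    have heq' : h ^ (k * i + 1) * g * h ^ j = g := by
      rw [pow_succ, pow_mul, mul_assoc ((h ^ k) ^ i) h g]; exact heq
    have hconj : g⁻¹ * h ^ (k * i + 1) * g = (h ^ j)⁻¹ := by
      calc g⁻¹ * h ^ (k * i + 1) * g
          = g⁻¹ * (h ^ (k * i + 1) * g * h ^ j) * (h ^ j)⁻¹ := by group
        _ = g⁻¹ * g * (h ^ j)⁻¹ := by rw [heq']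
        _ = (h ^ j)⁻¹ := by group
    have hmem : g⁻¹ * h ^ ((k * i + 1 : ℕ) : ℤ) * g⁻¹⁻¹ ∈ Subgroup.zpowers h := by
      rw [zpow_natCast, inv_inv, hconj]
      exact inv_mem (Subgroup.npow_mem_zpowers h j)
    have := hdvd _ hmem
    exact gcd_contra hgcd i (Int.ofNat_dvd.mp (by exact_mod_cast this))
  have h0' := congrArg (fun f : MonoidAlgebra ℤ G => f.coeff g) h0
  rw [hQ] at h0'
  exact absurd h0' hP.ne'

lemma TxR_ne (g h : G) (k m : ℕ)
    (hdvd : ∀ t : ℤ, g * h ^ t * g⁻¹ ∈ Subgroup.zpowers h → (m : ℤ) ∣ t)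
    (hgcd : Nat.gcd k m ≠ 1) :
    (grpTilde ℤ h * of' g * (1 - of' h)) * grpTilde ℤ (h ^ k) ≠ 0 := by
  intro h0
  have hsplit : (grpTilde ℤ h * of' g * (1 - of' h)) * grpTilde ℤ (h ^ k)
      = grpTilde ℤ h * (of' g * grpTilde ℤ (h ^ k))
        - grpTilde ℤ h * (of' (g * h) * grpTilde ℤ (h ^ k)) := by
    rw [map_mul]; noncomm_ring
  rw [hsplit, sub_eq_zero, expand_two, expand_two] at h0
  have hP := coeff_pos g (orderOf h) (orderOf (h ^ k)) (orderOf_pos _) (orderOf_pos _)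
    h (h ^ k) (by simp)
  have hQ : (∑ i ∈ Finset.range (orderOf h), ∑ j ∈ Finset.range (orderOf (h ^ k)),
      MonoidAlgebra.single (h ^ i * (g * h) * (h ^ k) ^ j) (1 : ℤ)).coeff g = 0 := by
    refine coeff_zero g (g * h) _ _ h (h ^ k) fun i j heq => ?_
    have heq' : h ^ i * g * h ^ (k * j + 1) = g := by
      rw [pow_succ', pow_mul, ← mul_assoc, mul_assoc (h ^ i) g h]; exact heq
    have hconj : g * h ^ (k * j + 1) * g⁻¹ = (h ^ i)⁻¹ := by
      calc g * h ^ (k * j + 1) * g⁻¹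
          = (h ^ i)⁻¹ * (h ^ i * g * h ^ (k * j + 1)) * g⁻¹ := by group
        _ = (h ^ i)⁻¹ * g * g⁻¹ := by rw [heq']
        _ = (h ^ i)⁻¹ := by group
    have hmem : g * h ^ ((k * j + 1 : ℕ) : ℤ) * g⁻¹ ∈ Subgroup.zpowers h := by
      rw [zpow_natCast, hconj]
      exact inv_mem (Subgroup.npow_mem_zpowers h i)
    have := hdvd _ hmem
    exact gcd_contra hgcd j (Int.ofNat_dvd.mp (by exact_mod_cast this))
  have h0' := congrArg (fun f : MonoidAlgebra ℤ G => f.coeff g) h0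
  rw [hQ] at h0'
  exact absurd h0' hP.ne'

end NonVanish

/-- Lemma 3.1(2): if `g ∉ N_G(⟨h⟩)`, `m` is the smallest positive integer with
`g ∈ N_G(⟨h^m⟩)`, `1 ≤ k < o(h)` and `gcd(k,m) ≠ 1`, then the Bovdi units `b_k(g,h̃)` and
`b_k(h̃,g)` are units of `ℤG` of infinite order. -/
theorem stmt_6 {G : Type*} [Group G] [Fintype G] (g h : G)
    (hg : g ∉ Subgroup.normalizer (Subgroup.zpowers h : Set G))
    (m : ℕ) (hm : 0 < m) (hgm : g ∈ Subgroup.normalizer (Subgroup.zpowers (h ^ m) : Set G))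
    (hmin : ∀ m' : ℕ, 0 < m' → g ∈ Subgroup.normalizer (Subgroup.zpowers (h ^ m') : Set G) → m ≤ m')
    (k : ℕ) (hk1 : 1 ≤ k) (hk2 : k < orderOf h)
    (hgcd : Nat.gcd k m ≠ 1) :
    IsUnit (bovdiL ℤ g h k) ∧ IsUnit (bovdiR ℤ g h k) ∧
      ∀ u : (MonoidAlgebra ℤ G)ˣ,
        ((↑u : MonoidAlgebra ℤ G) = bovdiL ℤ g h k ∨
          (↑u : MonoidAlgebra ℤ G) = bovdiR ℤ g h k) →
        ¬ IsOfFinOrder u := by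
  refine ⟨isUnit_bovdiL g h k, isUnit_bovdiR g h k, ?_⟩
  intro u hu hfin
  obtain ⟨n, hn, hun⟩ := isOfFinOrder_iff_pow_eq_one.mp hfin
  have hbn : ((u : MonoidAlgebra ℤ G)) ^ n = 1 := by
    have := congrArg (Units.val) hun
    simpa using this
  set e' := orderOf (h ^ k) with he'def
  have he' : 0 < e' := orderOf_pos _
  have hNk : (h ^ k) ^ (n * e') = 1 := by
    rw [mul_comm, pow_mul, he'def, pow_orderOf_eq_one, one_pow]
  -- divisibility oracle from the normalizer hypotheses
  have hdvdR : ∀ t : ℤ, g * h ^ t * g⁻¹ ∈ Subgroup.zpowers h → (m : ℤ) ∣ t :=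
    key_dvd g h m hm hgm hmin
  have hgm' : g⁻¹ ∈ Subgroup.normalizer (Subgroup.zpowers (h ^ m) : Set G) := inv_mem hgm
  have hmin' : ∀ m' : ℕ, 0 < m' → g⁻¹ ∈ Subgroup.normalizer (Subgroup.zpowers (h ^ m') : Set G) → m ≤ m' := by
    intro m' hp hn'
    exact hmin m' hp (by simpa using inv_mem hn')
  have hdvdL : ∀ t : ℤ, g⁻¹ * h ^ t * g⁻¹⁻¹ ∈ Subgroup.zpowers h → (m : ℤ) ∣ t :=
    key_dvd g⁻¹ h m hm hgm' hmin'
  rcases hu with hL | hR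
  · have hbig : (bovdiL ℤ g h k) ^ (n * e') = 1 := by
      rw [← hL, pow_mul, hbn, one_pow]
    rw [bovdiL_pow, hNk, map_one] at hbig
    have hzero : (∑ i ∈ Finset.range (n * e'), MonoidAlgebra.of ℤ G ((h ^ k) ^ i)) *
        ((1 - MonoidAlgebra.of ℤ G h) * MonoidAlgebra.of ℤ G g * grpTilde ℤ h) = 0 :=
      (add_eq_left).mp hbig
    rw [he'def, sum_range_periodic, smul_mul_assoc] at hzero
    exact TxL_ne g h k m hdvdL hgcd (nsmul_cancel hn hzero)
  · have hbig : (bovdiR ℤ g h k) ^ (n * e') = 1 := by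
      rw [← hR, pow_mul, hbn, one_pow]
    rw [bovdiR_pow, hNk, map_one] at hbig
    have hzero : (grpTilde ℤ h * MonoidAlgebra.of ℤ G g * (1 - MonoidAlgebra.of ℤ G h)) *
        (∑ i ∈ Finset.range (n * e'), MonoidAlgebra.of ℤ G ((h ^ k) ^ i)) = 0 :=
      (add_eq_left).mp hbig
    rw [he'def, sum_range_periodic, mul_smul_comm] at hzero
    exact TxR_ne g h k m hdvdR hgcd (nsmul_cancel hn hzero)
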